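/- Let C > e be a real number. The function g(x) = (C·log C)/(x + C) + log(x/(x + C)), defined for real x > 0, attains its maximum over (0, ∞) at x = C/(log C − 1), and its maximum value equals log C − log(log C) − 1. -/
import Mathlib


/-- The worst-case entropy-change function `g(x) = C·log C/(x+C) + log(x/(x+C))`
attains its maximum over `(0, ∞)` at `x = C/(log C − 1)`, with maximum value
`log C − log(log C) − 1`. -/
theorem g_max (C : ℝ) (hC : Real.exp 1 < C) :
    (∀ x ∈ Set.Ioi (0 : ℝ),
      (C * Real.log C) / (x + C) + Real.log (x / (x + C)) ≤
        (C * Real.log C) / (C / (Real.log C - 1) + C)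
          + Real.log ((C / (Real.log C - 1)) / (C / (Real.log C - 1) + C))) ∧
    C / (Real.log C - 1) ∈ Set.Ioi (0 : ℝ) ∧
    (C * Real.log C) / (C / (Real.log C - 1) + C)
        + Real.log ((C / (Real.log C - 1)) / (C / (Real.log C - 1) + C)) =
      Real.log C - Real.log (Real.log C) - 1 := by
  have hC0 : (0:ℝ) < C := lt_trans (Real.exp_pos 1) hC
  have hL : 1 < Real.log C := by
    have := Real.log_lt_log (Real.exp_pos 1) hC
    rwa [Real.log_exp] at this
  set L := Real.log C with hLdef
  have hL0 : 0 < L := by linarith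
  have hL1 : 0 < L - 1 := by linarith
  have hx0 : 0 < C / (L - 1) := div_pos hC0 hL1
  have hsum : C / (L - 1) + C = C * L / (L - 1) := by
    field_simp; ring
  have hCL : 0 < C * L := mul_pos hC0 hL0
  have hval : (C * L) / (C / (L - 1) + C)
        + Real.log ((C / (L - 1)) / (C / (L - 1) + C)) = L - Real.log L - 1 := by
    rw [hsum]
    have h1 : C * L / (C * L / (L - 1)) = L - 1 := by
      field_simp
    have h2 : (C / (L - 1)) / (C * L / (L - 1)) = L⁻¹ := by
      field_simp
    rw [h1, h2, Real.log_inv]; ring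
  refine ⟨?_, hx0, hval⟩
  intro x hx
  rw [Set.mem_Ioi] at hx
  have hxC : 0 < x + C := by linarith
  have hfrac : 0 < x / (x + C) := div_pos hx hxC
  have hy : 0 < L * (x / (x + C)) := mul_pos hL0 hfrac
  have key := Real.log_le_sub_one_of_pos hy
  rw [Real.log_mul hL0.ne' hfrac.ne'] at key
  -- key : log L + log (x/(x+C)) ≤ L * (x/(x+C)) - 1
  have hsum2 : C * L / (x + C) + L * (x / (x + C)) = L := by
    field_simp; ring
  have : C * L / (x + C) + Real.log (x / (x + C)) ≤ L - Real.log L - 1 := by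
    nlinarith [key, hsum2]
  rw [hval]
  linarith
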